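/- In a deterministic trilocal hidden variable model for the coarse-grained RBBBGB outputs {↑,↓,χ} satisfying the relaxed independence condition p(α,β,γ|λ) ≥ ε₁ p(α)p(β)p(γ) with ε₁ > 0, the zero-probability constraints p(a=↑,b=↑) = p(a=↓,b=↓) = 0 (and cyclic analogues) force the sets Λ_{A,0} = {α : ∃γ, b(α,γ)=↓} and Λ_{A,1} = {α : ∃β, c(α,β)=↓} to be disjoint. That is, no hidden-variable value α can both enable Bob to output ↓ (for some γ) and enable Charlie to output ↓ (for some β). -/

import Mathlib

open Finset
open Fin.NatCast

/-- RBBBGB disjointness: in a deterministic trilocal model for the coarse-grained outputs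
`{↑,↓,χ}` (encoded as `0,1,2` in `Fin 3`) satisfying the relaxed independence condition
`p(α,β,γ|λ) ≥ ε₁ p(α)p(β)p(γ)` with `ε₁ > 0`, the zero-probability constraints
`p(a=↑,b=↑) = p(a=↓,b=↓) = 0` and cyclic analogues force `Λ_{A,0}` and `Λ_{A,1}` to be
disjoint: no `α` can both enable Bob to output `↓` and enable Charlie to output `↓`. -/
theorem rbbbgb_disjointness
    {Λ A B C : Type*} [Fintype Λ] [Fintype A] [Fintype B] [Fintype C]
    (pl : Λ → ℝ) (pc : Λ → A → B → C → ℝ)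
    (hpl : ∀ l, 0 ≤ pl l) (hpl1 : ∑ l, pl l = 1)
    (hpc : ∀ l α β γ, 0 ≤ pc l α β γ)
    (hpc1 : ∀ l, ∑ α, ∑ β, ∑ γ, pc l α β γ = 1)
    (pA : A → ℝ) (pB : B → ℝ) (pC : C → ℝ)
    (hpA : ∀ α, pA α = ∑ l, pl l * ∑ β, ∑ γ, pc l α β γ)
    (hpB : ∀ β, pB β = ∑ l, pl l * ∑ α, ∑ γ, pc l α β γ)
    (hpC : ∀ γ, pC γ = ∑ l, pl l * ∑ α, ∑ β, pc l α β γ)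
    (hApos : ∀ α, 0 < pA α) (hBpos : ∀ β, 0 < pB β) (hCpos : ∀ γ, 0 < pC γ)
    (ε₁ : ℝ) (hε₁ : 0 < ε₁)
    (hlb : ∀ l α β γ, ε₁ * (pA α * pB β * pC γ) ≤ pc l α β γ)
    -- deterministic responses, outputs in Fin 3 : 0 = ↑, 1 = ↓, 2 = χ
    (aR : B → C → Fin 3) (bR : A → C → Fin 3) (cR : A → B → Fin 3)
    -- zero-probability constraints and cyclic analogues
    (hab : ∀ t : Fin 2, ∑ l, ∑ α, ∑ β, ∑ γ,
      (if aR β γ = (t : Fin 3) ∧ bR α γ = (t : Fin 3) then pl l * pc l α β γ else 0) = 0)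
    (hbc : ∀ t : Fin 2, ∑ l, ∑ α, ∑ β, ∑ γ,
      (if bR α γ = (t : Fin 3) ∧ cR α β = (t : Fin 3) then pl l * pc l α β γ else 0) = 0)
    (hca : ∀ t : Fin 2, ∑ l, ∑ α, ∑ β, ∑ γ,
      (if cR α β = (t : Fin 3) ∧ aR β γ = (t : Fin 3) then pl l * pc l α β γ else 0) = 0) :
    ∀ α, ¬ ((∃ γ, bR α γ = 1) ∧ (∃ β, cR α β = 1)) := by
  rintro α ⟨⟨γ₀, hγ⟩, ⟨β₀, hβ⟩⟩
  obtain ⟨l, hl⟩ : ∃ l, 0 < pl l := by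
    by_contra h
    push_neg at h
    have hz : ∀ l, pl l = 0 := fun l => le_antisymm (h l) (hpl l)
    simp [hz] at hpl1
  have hcoe : ((1 : Fin 2) : Fin 3) = 1 := rfl
  have h1 := hbc 1
  rw [hcoe] at h1
  set f : Λ → A → B → C → ℝ := fun l' α' β' γ' =>
    if bR α' γ' = 1 ∧ cR α' β' = 1 then pl l' * pc l' α' β' γ' else 0 with hf
  have hnn : ∀ l' α' β' γ', 0 ≤ f l' α' β' γ' := by
    intro l' α' β' γ'
    simp only [hf]
    split
    · exact mul_nonneg (hpl _) (hpc _ _ _ _)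
    · exact le_rfl
  have hzero : f l α β₀ γ₀ = 0 := by
    have h2 := (Finset.sum_eq_zero_iff_of_nonneg (fun l' _ =>
      Finset.sum_nonneg fun α' _ => Finset.sum_nonneg fun β' _ =>
        Finset.sum_nonneg fun γ' _ => hnn l' α' β' γ')).mp h1 l (Finset.mem_univ l)
    have h3 := (Finset.sum_eq_zero_iff_of_nonneg (fun α' _ =>
      Finset.sum_nonneg fun β' _ => Finset.sum_nonneg fun γ' _ =>
        hnn l α' β' γ')).mp h2 α (Finset.mem_univ α)
    have h4 := (Finset.sum_eq_zero_iff_of_nonneg (fun β' _ =>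
      Finset.sum_nonneg fun γ' _ => hnn l α β' γ')).mp h3 β₀ (Finset.mem_univ β₀)
    exact (Finset.sum_eq_zero_iff_of_nonneg (fun γ' _ => hnn l α β₀ γ')).mp h4 γ₀
      (Finset.mem_univ γ₀)
  have hpcpos : 0 < pc l α β₀ γ₀ :=
    lt_of_lt_of_le (mul_pos hε₁ (mul_pos (mul_pos (hApos α) (hBpos β₀)) (hCpos γ₀))) (hlb l α β₀ γ₀)
  have : f l α β₀ γ₀ = pl l * pc l α β₀ γ₀ := by
    simp only [hf, hγ, hβ, and_self, if_true]
  rw [this] at hzero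
  exact absurd hzero (ne_of_gt (mul_pos hl hpcpos))
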